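/- Let S be the Cox ring of P^{n_1} × ... × P^{n_s} and let M be a strongly multistable set of monomials of degree (a_1,...,a_s) that is x_1,...,x_{i−1}-lex for some 2 ≤ i ≤ s. Then M^{x_i lex} is x_1,...,x_i-lex. -/

import Mathlib

open MvPolynomial

namespace Gotzmann

/-- Variable index set for the Cox ring of `P^{n 0} × ... × P^{n (s-1)}`:
the variable `x_{i,j}` is `⟨i, j⟩`. -/
abbrev PPVar (s : ℕ) (n : Fin s → ℕ) : Type := Σ i : Fin s, Fin (n i + 1)

/-- The multidegree of the variable `x_{i,j}` is the standard basis vector `e_i ∈ ℤ^s` (here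
realised in `ℕ^s`). -/
def ppw (s : ℕ) (n : Fin s → ℕ) : PPVar s n → (Fin s → ℕ) :=
  fun v => Pi.single v.1 1

/-- Weighted degree of an exponent vector. -/
def wdeg {σ M : Type*} [AddCommMonoid M] (w : σ → M) (u : σ →₀ ℕ) : M :=
  u.sum fun v e => e • w v

/-- Multigraded Hilbert function of `S/I` in degree `b`: the dimension of the image of the
degree-`b` part of `S` in `S/I`. -/
noncomputable def hilb (k : Type*) [Field k] {σ M : Type*} [AddCommMonoid M]
    (w : σ → M) (I : Ideal (MvPolynomial σ k)) (b : M) : ℕ :=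
  Module.finrank k ((weightedHomogeneousSubmodule k w b).map
    (Ideal.Quotient.mkₐ k I).toLinearMap)

/-- An ideal homogeneous with respect to the grading by `w`. -/
def IsHomog {k : Type*} [Field k] {σ M : Type*} [AddCommMonoid M]
    (w : σ → M) (I : Ideal (MvPolynomial σ k)) : Prop :=
  ∃ G : Set (MvPolynomial σ k),
    (∀ f ∈ G, ∃ d : M, f.IsWeightedHomogeneous w d) ∧ I = Ideal.span G

/-- A monomial ideal. -/
def IsMonomialIdeal {k : Type*} [Field k] {σ : Type*} (I : Ideal (MvPolynomial σ k)) : Prop :=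
  ∃ A : Set (σ →₀ ℕ), I = Ideal.span ((fun u => (monomial u (1 : k))) '' A)

/-- Generated in degrees componentwise at most `a`. -/
def GenInDegLE {k : Type*} [Field k] {σ : Type*} {s : ℕ}
    (w : σ → (Fin s → ℕ)) (I : Ideal (MvPolynomial σ k)) (a : Fin s → ℕ) : Prop :=
  ∃ G : Set (MvPolynomial σ k), I = Ideal.span G ∧
    ∀ f ∈ G, ∃ d : Fin s → ℕ, f.IsWeightedHomogeneous w d ∧ ∀ i, d i ≤ a i

/-- Generated in degrees at most `a` for the standard grading. -/
def GenInDegLE1 {k : Type*} [Field k] {σ : Type*}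
    (I : Ideal (MvPolynomial σ k)) (a : ℕ) : Prop :=
  ∃ G : Set (MvPolynomial σ k), I = Ideal.span G ∧
    ∀ f ∈ G, ∃ d : ℕ, f.IsWeightedHomogeneous (fun _ : σ => (1 : ℕ)) d ∧ d ≤ a

/-- `P` is the (multigraded) Hilbert polynomial of `I`: it agrees with the Hilbert function
for all multidegrees sufficiently deep in `ℕ^s`. -/
def IsHilbPoly (k : Type*) [Field k] {σ : Type*} {s : ℕ}
    (w : σ → (Fin s → ℕ)) (I : Ideal (MvPolynomial σ k))
    (P : MvPolynomial (Fin s) ℚ) : Prop :=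
  ∃ N : ℕ, ∀ b : Fin s → ℕ, (∀ i, N ≤ b i) →
    eval (fun i => (b i : ℚ)) P = (hilb k w I b : ℚ)

/-- `P` is the Hilbert polynomial of the standard-graded ideal `I`. -/
def IsHilbPoly1 (k : Type*) [Field k] {σ : Type*}
    (I : Ideal (MvPolynomial σ k)) (P : Polynomial ℚ) : Prop :=
  ∃ N : ℕ, ∀ b : ℕ, N ≤ b →
    P.eval (b : ℚ) = (hilb k (fun _ : σ => (1 : ℕ)) I b : ℚ)

/-- Hilbert polynomial for a `ℤ^s`-graded ring, agreement deep in `ℕ^s ⊆ ℤ^s`. -/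
def IsHilbPolyZ (k : Type*) [Field k] {σ : Type*} {s : ℕ}
    (w : σ → (Fin s → ℤ)) (I : Ideal (MvPolynomial σ k))
    (P : MvPolynomial (Fin s) ℚ) : Prop :=
  ∃ N : ℕ, ∀ b : Fin s → ℕ, (∀ i, N ≤ b i) →
    eval (fun i => (b i : ℚ)) P = (hilb k w I (fun i => (b i : ℤ)) : ℚ)

/-- A strongly multistable (monomial) ideal. -/
def StronglyMultistable {k : Type*} [Field k] {s : ℕ} {n : Fin s → ℕ}
    (I : Ideal (MvPolynomial (PPVar s n) k)) : Prop :=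
  IsMonomialIdeal I ∧
    ∀ u : PPVar s n →₀ ℕ, (monomial u (1 : k)) ∈ I →
      ∀ (i : Fin s) (j j' : Fin (n i + 1)), j' < j → u ⟨i, j⟩ ≠ 0 →
        (monomial (u - Finsupp.single ⟨i, j⟩ 1 + Finsupp.single ⟨i, j'⟩ 1) (1 : k)) ∈ I

/-- A strongly multistable set of exponent vectors. -/
def StronglyMultistableSet {s : ℕ} {n : Fin s → ℕ} (M : Set (PPVar s n →₀ ℕ)) : Prop :=
  ∀ u ∈ M, ∀ (i : Fin s) (j j' : Fin (n i + 1)), j' < j → u ⟨i, j⟩ ≠ 0 →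
    u - Finsupp.single ⟨i, j⟩ 1 + Finsupp.single ⟨i, j'⟩ 1 ∈ M

/-- The part of an exponent vector supported on block `i`. -/
noncomputable def blockPart {s : ℕ} {n : Fin s → ℕ} (i : Fin s) (u : PPVar s n →₀ ℕ) :
    PPVar s n →₀ ℕ := u.filter fun v => v.1 = i

/-- The part of an exponent vector supported off block `i`. -/
noncomputable def offBlock {s : ℕ} {n : Fin s → ℕ} (i : Fin s) (u : PPVar s n →₀ ℕ) :
    PPVar s n →₀ ℕ := u.filter fun v => v.1 ≠ i

/-- Exponent vectors supported on block `i` of total degree `d`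
(monomials of degree `d·e_i`). -/
def blockMon {s : ℕ} {n : Fin s → ℕ} (i : Fin s) (d : ℕ) : Set (PPVar s n →₀ ℕ) :=
  {p | (∀ v ∈ p.support, v.1 = i) ∧ p.sum (fun _ e => e) = d}

/-- `blockLt i u v` : the block-`i` monomial of `v` is strictly larger than that of `u` in the
lexicographic order with `x_{i,0} ≻ x_{i,1} ≻ ⋯`. -/
def blockLt {s : ℕ} {n : Fin s → ℕ} (i : Fin s) (u v : PPVar s n →₀ ℕ) : Prop :=
  Pi.Lex (· < ·) (fun {_} => (· < ·)) (fun j => u ⟨i, j⟩) (fun j => v ⟨i, j⟩)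

/-- `M` is an `x_i`-lex set: replacing the block-`i` part of a member by any lexicographically
larger monomial of the same degree stays in `M`. -/
def IsXiLex {s : ℕ} {n : Fin s → ℕ} (i : Fin s) (M : Set (PPVar s n →₀ ℕ)) : Prop :=
  ∀ u ∈ M, ∀ p' : PPVar s n →₀ ℕ,
    (∀ v ∈ p'.support, v.1 = i) →
    p'.sum (fun _ e => e) = (blockPart i u).sum (fun _ e => e) →
    blockLt i (blockPart i u) p' →
    offBlock i u + p' ∈ M

/-- The initial lexsegment of size `c` among block-`i` monomials of degree `d`. -/
noncomputable def lexSeg {s : ℕ} {n : Fin s → ℕ} (i : Fin s) (d c : ℕ) :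
    Set (PPVar s n →₀ ℕ) :=
  {p ∈ blockMon i d | (blockMon (n := n) i d ∩ {p' | blockLt i p p'}).ncard < c}

/-- The operation `M ↦ M^{x_i lex}`: in each fibre over a fixed off-block-`i` part, replace the
set of block-`i` parts by the initial lexsegment of the same cardinality. -/
noncomputable def xiLexify {s : ℕ} {n : Fin s → ℕ} (i : Fin s)
    (M : Set (PPVar s n →₀ ℕ)) : Set (PPVar s n →₀ ℕ) :=
  {w | ∃ u ∈ M, offBlock i w = offBlock i u ∧
        blockPart i w ∈ lexSeg i ((blockPart i u).sum fun _ e => e)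
          ({p | p ∈ blockMon i ((blockPart i u).sum fun _ e => e) ∧
              offBlock i u + p ∈ M}).ncard}

/-- Successively apply `M ↦ M^{x_i lex}` for the first `t` blocks. -/
noncomputable def lexifyUpTo {s : ℕ} {n : Fin s → ℕ} (M : Set (PPVar s n →₀ ℕ)) :
    ℕ → Set (PPVar s n →₀ ℕ)
  | 0 => M
  | t + 1 => if h : t < s then xiLexify ⟨t, h⟩ (lexifyUpTo M t) else lexifyUpTo M t

/-- `M^{multilex} = M^{x_1 lex ⋯ x_s lex}`. -/
noncomputable def multilexify {s : ℕ} {n : Fin s → ℕ} (M : Set (PPVar s n →₀ ℕ)) :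
    Set (PPVar s n →₀ ℕ) := lexifyUpTo M s

/-- The exponent vectors of the monomials of `I` of multidegree `a`. -/
def monomialsOf {k : Type*} [Field k] {s : ℕ} {n : Fin s → ℕ}
    (I : Ideal (MvPolynomial (PPVar s n) k)) (a : Fin s → ℕ) : Set (PPVar s n →₀ ℕ) :=
  {u | wdeg (ppw s n) u = a ∧ (monomial u (1 : k)) ∈ I}

/-- A multilex (monomial) ideal. -/
def IsMultilexIdeal {k : Type*} [Field k] {s : ℕ} {n : Fin s → ℕ}
    (I : Ideal (MvPolynomial (PPVar s n) k)) : Prop :=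
  IsMonomialIdeal I ∧ ∀ (a : Fin s → ℕ) (i : Fin s), IsXiLex i (monomialsOf I a)

/-- `κ` encodes the `d`-th Macaulay representation of `α`:
`α = C(κ(d),d) + ⋯ + C(κ(1),1)` with `κ(d) > ⋯ > κ(1) ≥ 0`; here `κ j` is the paper's
`κ(j+1)`. -/
def IsMacaulayRep (d α : ℕ) (κ : Fin d → ℕ) : Prop :=
  StrictMono κ ∧ α = ∑ j : Fin d, Nat.choose (κ j) ((j : ℕ) + 1)

/-- The Macaulay bound `α^{⟨d⟩}`. -/
noncomputable def macaulayBound (d α : ℕ) : ℕ :=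
  letI := Classical.propDecidable (∃ κ : Fin d → ℕ, IsMacaulayRep d α κ)
  if h : ∃ κ : Fin d → ℕ, IsMacaulayRep d α κ
  then ∑ j : Fin d, Nat.choose (h.choose j + 1) ((j : ℕ) + 2)
  else 0

/-- Maximal growth of a Hilbert function in one direction: with
`H u = C(nv+u, nv)·q(u) + r(u)` the Euclidean division, `H (u+1) = C(nv+u+1,nv)·q(u) + r(u)^⟨u⟩`. -/
def growthStep (nv : ℕ) (H : ℕ → ℕ) (u : ℕ) : Prop :=
  H (u + 1) =
    (nv + u + 1).choose nv * (H u / (nv + u).choose nv)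
      + macaulayBound u (H u % (nv + u).choose nv)

/-- Hilbert polynomial for a `ℤ^s`-graded Cox ring, with agreement sufficiently far into the nef
cone, parameterised by nef classes `c i`. -/
def IsHilbPolyNef (k : Type*) [Field k] {σ : Type*} {s : ℕ}
    (w : σ → (Fin s → ℤ)) (c : Fin s → (Fin s → ℤ))
    (I : Ideal (MvPolynomial σ k)) (P : MvPolynomial (Fin s) ℚ) : Prop :=
  ∃ N : ℕ, ∀ b : Fin s → ℕ, (∀ i, N ≤ b i) →
    eval (fun j => ((∑ i, (b i : ℤ) * c i j : ℤ) : ℚ)) P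
      = (hilb k w I (fun j => ∑ i, (b i : ℤ) * c i j) : ℚ)

/-- The `ℤ²`-grading of the Cox ring of Kleinschmidt's Picard-rank-2 toric variety `X_d(a)`:
`deg z_i = (-a_i, 1)` for `1 ≤ i ≤ s`, `deg z_{s+1} = (0,1)`, `deg z_i = (1,0)` otherwise
(indices here are `0`-based). -/
def kw (d s : ℕ) (a : Fin s → ℕ) : Fin (d + 2) → (Fin 2 → ℤ) :=
  fun i => if h : (i : ℕ) < s then ![-(a ⟨i, h⟩ : ℤ), 1]
    else if (i : ℕ) = s then ![0, 1] else ![1, 0]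

section Aux

variable {s : ℕ} {n : Fin s → ℕ}

lemma offBlock_add (i : Fin s) (u v : PPVar s n →₀ ℕ) :
    offBlock i (u + v) = offBlock i u + offBlock i v := Finsupp.filter_add

lemma blockPart_add (i : Fin s) (u v : PPVar s n →₀ ℕ) :
    blockPart i (u + v) = blockPart i u + blockPart i v := Finsupp.filter_add

lemma blockPart_eq_self (i : Fin s) {p : PPVar s n →₀ ℕ}
    (h : ∀ v ∈ p.support, v.1 = i) : blockPart i p = p :=
  (Finsupp.filter_eq_self_iff _ _).mpr fun v hv => h v (Finsupp.mem_support_iff.mpr hv)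

lemma blockPart_eq_zero {i j : Fin s} (hij : j ≠ i) {p : PPVar s n →₀ ℕ}
    (h : ∀ v ∈ p.support, v.1 = j) : blockPart i p = 0 :=
  (Finsupp.filter_eq_zero_iff _ _).mpr fun v hv => by
    by_contra hne
    exact hij ((h v (Finsupp.mem_support_iff.mpr hne)) ▸ hv)

lemma offBlock_eq_self {i j : Fin s} (hij : j ≠ i) {p : PPVar s n →₀ ℕ}
    (h : ∀ v ∈ p.support, v.1 = j) : offBlock i p = p :=
  (Finsupp.filter_eq_self_iff _ _).mpr fun v hv =>
    (h v (Finsupp.mem_support_iff.mpr hv)) ▸ hij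

lemma offBlock_eq_zero (i : Fin s) {p : PPVar s n →₀ ℕ}
    (h : ∀ v ∈ p.support, v.1 = i) : offBlock i p = 0 :=
  (Finsupp.filter_eq_zero_iff _ _).mpr fun v hv => by
    by_contra hne
    exact hv (h v (Finsupp.mem_support_iff.mpr hne))

lemma offBlock_offBlock (i j : Fin s) (u : PPVar s n →₀ ℕ) :
    offBlock i (offBlock j u) = offBlock j (offBlock i u) := by
  ext v
  simp only [offBlock, Finsupp.filter_apply]
  split_ifs <;> rfl

lemma offBlock_offBlock_self (i : Fin s) (u : PPVar s n →₀ ℕ) :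
    offBlock i (offBlock i u) = offBlock i u := by
  ext v
  simp only [offBlock, Finsupp.filter_apply]
  split_ifs <;> rfl

lemma blockPart_offBlock_self (i : Fin s) (u : PPVar s n →₀ ℕ) :
    blockPart i (offBlock i u) = 0 := by
  ext v
  simp only [blockPart, offBlock, Finsupp.filter_apply, Finsupp.coe_zero, Pi.zero_apply]
  split_ifs <;> simp_all

lemma blockPart_offBlock {i j : Fin s} (hij : j ≠ i) (u : PPVar s n →₀ ℕ) :
    blockPart j (offBlock i u) = blockPart j u := by
  ext v
  simp only [blockPart, offBlock, Finsupp.filter_apply]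
  split_ifs <;> simp_all

lemma blockPart_support (i : Fin s) (u : PPVar s n →₀ ℕ) :
    ∀ v ∈ (blockPart i u).support, v.1 = i := by
  intro v hv
  classical
  rw [blockPart, Finsupp.support_filter, Finset.mem_filter] at hv
  exact hv.2

lemma blockLt_trans {i : Fin s} {u v w : PPVar s n →₀ ℕ}
    (h1 : blockLt i u v) (h2 : blockLt i v w) : blockLt i u w :=
  @lt_trans (Lex (Fin (n i + 1) → ℕ)) _
    (toLex fun j => u ⟨i, j⟩) (toLex fun j => v ⟨i, j⟩) (toLex fun j => w ⟨i, j⟩) h1 h2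

lemma blockMon_finite (i : Fin s) (d : ℕ) : (blockMon (n := n) i d).Finite := by
  apply Set.Finite.subset (Set.finite_Iic (Finsupp.equivFunOnFinite.symm fun _ : PPVar s n => d))
  rintro p ⟨-, hsum⟩
  intro v
  have h1 : p v ≤ p.sum fun _ e => e := by
    by_cases hv : v ∈ p.support
    · exact Finset.single_le_sum (f := fun w => p w) (fun _ _ => Nat.zero_le _) hv
    · simp [Finsupp.notMem_support_iff.mp hv]
  exact h1.trans_eq hsum

end Aux

/-- **Lemma: `M^{x_i lex}` is `x_1,…,x_i`-lex.** If `M` is a strongly multistable set of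
monomials of multidegree `a` which is `x_1,…,x_{i−1}`-lex (indices `0`-based: `x_{i'}`-lex for
all `i' < i`, where `i ≥ 1`), then `M^{x_i lex}` is `x_{i'}`-lex for all `i' ≤ i`. -/
theorem xiLexify_isLex {s : ℕ} {n : Fin s → ℕ} (a : Fin s → ℕ)
    (M : Set (PPVar s n →₀ ℕ))
    (hdeg : ∀ u ∈ M, wdeg (ppw s n) u = a)
    (hstab : StronglyMultistableSet M)
    (i : Fin s) (hi : 1 ≤ (i : ℕ))
    (hlex : ∀ i' : Fin s, i' < i → IsXiLex i' M) :
    ∀ i' : Fin s, i' ≤ i → IsXiLex i' (xiLexify i M) := by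
  intro i' hi'
  rcases eq_or_lt_of_le hi' with heq | hlt'
  · -- case i' = i : a lexsegment is automatically lex
    subst heq
    intro w hw p' hsupp hdeg' hlt
    obtain ⟨u, huM, hoff, hseg⟩ := hw
    obtain ⟨⟨hwsupp, hwsum⟩, hcard⟩ := hseg
    refine ⟨u, huM, ?_, ?_⟩
    · rw [offBlock_add, offBlock_offBlock_self, offBlock_eq_zero i' hsupp, add_zero]
      exact hoff
    · have h1 : blockPart i' (offBlock i' w + p') = p' := by
        rw [blockPart_add, blockPart_offBlock_self, blockPart_eq_self i' hsupp, zero_add]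
      rw [h1]
      refine ⟨⟨hsupp, ?_⟩, ?_⟩
      · rw [hdeg', hwsum]
      · refine lt_of_le_of_lt
          (Set.ncard_le_ncard ?_ ((blockMon_finite i' _).inter_of_left _)) hcard
        rintro q ⟨hq1, hq2⟩
        exact ⟨hq1, blockLt_trans hlt hq2⟩
  · -- case i' < i
    have hne : i' ≠ i := Fin.ne_of_lt hlt'
    have hne' : i ≠ i' := hne.symm
    intro w hw p' hsupp hdeg' hlt
    obtain ⟨u, huM, hoff, hseg⟩ := hw
    obtain ⟨⟨hwsupp, hwsum⟩, hcard⟩ := hseg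
    -- the i'-block parts of w and u agree
    have hbp : blockPart i' w = blockPart i' u := by
      rw [← blockPart_offBlock hne w, hoff, blockPart_offBlock hne u]
    have huM' : offBlock i' u + p' ∈ M :=
      hlex i' hlt' u huM p' hsupp (by rw [hdeg', hbp]) (hbp ▸ hlt)
    refine ⟨offBlock i' u + p', huM', ?_, ?_⟩
    · rw [offBlock_add, offBlock_add, offBlock_offBlock, hoff, ← offBlock_offBlock]
    · have h1 : blockPart i (offBlock i' w + p') = blockPart i w := by
        rw [blockPart_add, blockPart_offBlock hne' w, blockPart_eq_zero hne hsupp, add_zero]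
      have h2 : blockPart i (offBlock i' u + p') = blockPart i u := by
        rw [blockPart_add, blockPart_offBlock hne' u, blockPart_eq_zero hne hsupp, add_zero]
      rw [h1, h2]
      refine ⟨⟨hwsupp, hwsum⟩, lt_of_lt_of_le hcard (Set.ncard_le_ncard ?_ ?_)⟩
      · -- the fibre over u injects (in fact includes) into the fibre over u'
        rintro p ⟨hpmon, hpM⟩
        refine ⟨hpmon, ?_⟩
        have hbp2 : blockPart i' (offBlock i u + p) = blockPart i' u := by
          rw [blockPart_add, blockPart_offBlock hne u, blockPart_eq_zero hne' hpmon.1,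
            add_zero]
        have hv := hlex i' hlt' (offBlock i u + p) hpM p' hsupp
          (by rw [hbp2, ← hbp]; exact hdeg') (by rw [hbp2, ← hbp]; exact hlt)
        have heq2 : offBlock i (offBlock i' u + p') + p
            = offBlock i' (offBlock i u + p) + p' := by
          rw [offBlock_add, offBlock_add, offBlock_offBlock,
            offBlock_eq_self hne hsupp, offBlock_eq_self hne' hpmon.1]
          exact add_right_comm _ _ _
        rw [heq2]
        exact hv
      · exact (blockMon_finite i _).subset fun p hp => hp.1

end Gotzmann
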